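/- Let C = FLRS[γ, a, h; N, k] be a folded linearized Reed–Solomon code with equal folding parameter h for all blocks and let φ_α be the skew-to-sum-rank isometry X ↦ fold(unfold(X)·diag(β^{−1})) with β the vector of code locator powers of γ. Then the image {φ_α(C) : C ∈ C} equals the folded skew Reed–Solomon code FSRS[b, h; N, k], where b^{(i)} = a_i·(1, α, α², ..., α^{n_i−1}) with α = σ(γ)/γ. -/

import Mathlib

/-- Iterated generalized operator `D_a^r(b)` for zero derivation: `D_a(b) = σ(b)·a`. -/
def Dit {F : Type*} [Field F] (σ : F ≃+* F) (a b : F) : ℕ → F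
  | 0 => b
  | r + 1 => σ (Dit σ a b r) * a

/-- Generalized operator evaluation of a skew polynomial at `b` w.r.t. parameter `a`. -/
noncomputable def opev {F : Type*} [Field F] (σ : F ≃+* F) (f : Polynomial F)
    (a b : F) : F :=
  ∑ r ∈ f.support, f.coeff r * Dit σ a b r

/-- The `i`-th truncated norm `N_i(β) = β·σ(β)···σ^{i−1}(β)`. -/
def Nrm {F : Type*} [Field F] (σ : F ≃+* F) (β : F) (i : ℕ) : F :=
  ∏ t ∈ Finset.range i, (⇑σ)^[t] β

/-- Remainder evaluation of a skew polynomial (zero derivation):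
`f[β] = Σ_i f_i N_i(β)` (Lam–Leroy). -/
noncomputable def remev {F : Type*} [Field F] (σ : F ≃+* F) (f : Polynomial F)
    (β : F) : F :=
  ∑ i ∈ f.support, f.coeff i * Nrm σ β i

/-- The fixed subfield `F_q` of the automorphism `σ`. -/
def fixedSubfield {F : Type*} [Field F] (σ : F ≃+* F) : Subfield F where
  carrier := {x | σ x = x}
  mul_mem' := by
    intro a b (ha : σ a = a) (hb : σ b = b)
    show σ (a * b) = a * b
    rw [map_mul, ha, hb]
  one_mem' := by show σ 1 = 1; simp
  add_mem' := by
    intro a b (ha : σ a = a) (hb : σ b = b)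
    show σ (a + b) = a + b
    rw [map_add, ha, hb]
  zero_mem' := by show σ 0 = 0; simp
  neg_mem' := by
    intro a (ha : σ a = a)
    show σ (-a) = -a
    rw [map_neg, ha]
  inv_mem' := by
    intro a (ha : σ a = a)
    show σ a⁻¹ = a⁻¹
    rw [map_inv₀, ha]

lemma Nrm_succ' {F : Type*} [Field F] (σ : F ≃+* F) (β : F) (r : ℕ) :
    Nrm σ β (r + 1) = β * Nrm σ (σ β) r := by
  unfold Nrm
  rw [Finset.prod_range_succ']
  simp [Function.iterate_succ_apply, mul_comm]

lemma Dit_sigma {F : Type*} [Field F] (σ : F ≃+* F) (a b : F) (r : ℕ) :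
    σ (Dit σ a b r) = Dit σ (σ a) (σ b) r := by
  induction r with
  | zero => rfl
  | succ r ih => simp only [Dit, map_mul, ih]

lemma key_lemma {F : Type*} [Field F] (σ : F ≃+* F) (r : ℕ) :
    ∀ a b : F, b ≠ 0 → Nrm σ (σ b * a * b⁻¹) r = Dit σ a b r * b⁻¹ := by
  induction r with
  | zero => intro a b hb; simp [Nrm, Dit, mul_inv_cancel₀ hb]
  | succ r ih =>
    intro a b hb
    have hsb : σ b ≠ 0 := fun h => hb (by simpa using congrArg σ.symm h)
    rw [Nrm_succ']
    have : σ (σ b * a * b⁻¹) = σ (σ b) * σ a * (σ b)⁻¹ := by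
      rw [map_mul, map_mul, map_inv₀]
    rw [this, ih (σ a) (σ b) hsb, ← Dit_sigma]
    show σ b * a * b⁻¹ * (σ (Dit σ a b r) * (σ b)⁻¹) = Dit σ a b (r + 1) * b⁻¹
    show σ b * a * b⁻¹ * (σ (Dit σ a b r) * (σ b)⁻¹)
        = σ (Dit σ a b r) * a * b⁻¹
    field_simp

lemma remev_eq_opev {F : Type*} [Field F] (σ : F ≃+* F) (f : Polynomial F)
    (a γ α : F) (hγ : γ ≠ 0) (hα : α = σ γ * γ⁻¹) (j : ℕ) :
    remev σ f (a * α ^ j) = opev σ f a (γ ^ j) * (γ ^ j)⁻¹ := by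
  have hγj : γ ^ j ≠ 0 := pow_ne_zero _ hγ
  have hb : a * α ^ j = σ (γ ^ j) * a * (γ ^ j)⁻¹ := by
    rw [hα, map_pow, mul_pow]
    field_simp
    rw [mul_assoc (a * σ γ ^ j), ← mul_pow, one_div, inv_mul_cancel₀ hγ, one_pow, mul_one]
  unfold remev opev
  rw [Finset.sum_mul]
  refine Finset.sum_congr rfl fun i _ => ?_
  rw [hb, key_lemma σ i a (γ ^ j) hγj, mul_assoc]

/-- The image of a folded linearized Reed–Solomon code (equal folding parameter `h`)
under the skew-to-sum-rank isometry `φ_α` (blockwise entrywise division by the code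
locator powers of `γ`) is the corresponding folded skew Reed–Solomon code with
evaluation points `a_i·α^w`, `α = σ(γ)/γ`. -/
theorem stmt_18 (F : Type*) [Field F] [Fintype F] (σ : F ≃+* F)
    (ℓ h k : ℕ) (hℓ : 0 < ℓ) (hh : 0 < h) (hk : 0 < k)
    (Nv : Fin ℓ → ℕ) (hNpos : ∀ i, 0 < Nv i) (hNh : ∀ i, Nv i ≤ h)
    (hkN : k ≤ h * ∑ i, Nv i)
    (hnm : ∀ i, h * Nv i ≤ Module.finrank (fixedSubfield σ) F)
    (γ : F) (hγ0 : γ ≠ 0) (hprim : ∀ x : F, x ≠ 0 → ∃ j : ℕ, x = γ ^ j)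
    (a : Fin ℓ → F) (ha0 : ∀ i, a i ≠ 0)
    (hconj : ∀ i i' : Fin ℓ, i ≠ i' →
      ¬ ∃ c : F, c ≠ 0 ∧ σ c * a i * c⁻¹ = a i')
    (α : F) (hα : α = σ γ * γ⁻¹) :
    (fun X : ∀ i : Fin ℓ, Matrix (Fin h) (Fin (Nv i)) F =>
        fun i => Matrix.of fun r c => X i r c * (γ ^ (c.1 * h + r.1))⁻¹) ''
      {X : ∀ i : Fin ℓ, Matrix (Fin h) (Fin (Nv i)) F |
        ∃ f : Polynomial F, f.degree < (k : ℕ) ∧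
          ∀ i r c, X i r c = opev σ f (a i) (γ ^ (c.1 * h + r.1))} =
    {X : ∀ i : Fin ℓ, Matrix (Fin h) (Fin (Nv i)) F |
      ∃ f : Polynomial F, f.degree < (k : ℕ) ∧
        ∀ i r c, X i r c = remev σ f (a i * α ^ (c.1 * h + r.1))} := by
  ext X
  constructor
  · rintro ⟨Y, ⟨f, hf, hY⟩, rfl⟩
    refine ⟨f, hf, fun i r c => ?_⟩
    show Y i r c * (γ ^ (c.1 * h + r.1))⁻¹ = _
    rw [hY i r c, ← remev_eq_opev σ f (a i) γ α hγ0 hα]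
  · rintro ⟨f, hf, hX⟩
    refine ⟨fun i => Matrix.of fun r c => opev σ f (a i) (γ ^ (c.1 * h + r.1)),
      ⟨f, hf, fun i r c => rfl⟩, ?_⟩
    funext i
    ext r c
    show opev σ f (a i) (γ ^ (c.1 * h + r.1)) * (γ ^ (c.1 * h + r.1))⁻¹ = X i r c
    rw [hX i r c, remev_eq_opev σ f (a i) γ α hγ0 hα]
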